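/- The Schubert statistic of a concatenation satisfies: if I = S_1 ⊔ S_2 = T_1 ⊔ T_2, ℓ_1 is a linear order on S_1 and ℓ_2 is a linear order on S_2, and A = S_1∩T_1, B = S_1∩T_2, C = S_2∩T_1, D = S_2∩T_2, then schub_{T_1,T_2}(ℓ_1 · ℓ_2) = schub_{A,B}(ℓ_1) + schub_{C,D}(ℓ_2) + |B||C|. -/

import Mathlib

/-- The Schubert statistic: for a linear order `ℓ` (a list) and disjoint sets `S`, `T`,
`schub S T ℓ` counts pairs `(i, j) ∈ S × T` with `i` strictly later than `j` in `ℓ`. -/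
def schub {α : Type*} [DecidableEq α] (S T : Finset α) (ℓ : List α) : ℕ :=
  ((S ×ˢ T).filter fun p => ℓ.idxOf p.2 < ℓ.idxOf p.1).card

/-- Schubert statistic of a concatenation: with `I = S₁ ⊔ S₂ = T₁ ⊔ T₂`, a linear
order `ℓ₁` on `S₁` and `ℓ₂` on `S₂`, and `A = S₁∩T₁`, `B = S₁∩T₂`, `C = S₂∩T₁`,
`D = S₂∩T₂`, one has
`schub_{T₁,T₂}(ℓ₁·ℓ₂) = schub_{A,B}(ℓ₁) + schub_{C,D}(ℓ₂) + |B||C|`. -/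
theorem schub_concat {α : Type*} [DecidableEq α] (S₁ S₂ T₁ T₂ : Finset α)
    (hS : S₁ ∩ S₂ = ∅) (hT : T₁ ∩ T₂ = ∅) (hTS : T₁ ∪ T₂ = S₁ ∪ S₂)
    (ℓ₁ ℓ₂ : List α) (hnd₁ : ℓ₁.Nodup) (hnd₂ : ℓ₂.Nodup)
    (hto₁ : ℓ₁.toFinset = S₁) (hto₂ : ℓ₂.toFinset = S₂) :
    schub T₁ T₂ (ℓ₁ ++ ℓ₂) =
      schub (S₁ ∩ T₁) (S₁ ∩ T₂) ℓ₁ + schub (S₂ ∩ T₁) (S₂ ∩ T₂) ℓ₂ +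
        (S₁ ∩ T₂).card * (S₂ ∩ T₁).card := by
  classical
  have hd : Disjoint S₁ S₂ := Finset.disjoint_iff_inter_eq_empty.mpr hS
  have hmem₁ : ∀ x, x ∈ ℓ₁ ↔ x ∈ S₁ := fun x => by rw [← hto₁, List.mem_toFinset]
  have hmem₂ : ∀ x, x ∈ ℓ₂ ↔ x ∈ S₂ := fun x => by rw [← hto₂, List.mem_toFinset]
  have hidx₁ : ∀ x ∈ S₁, (ℓ₁ ++ ℓ₂).idxOf x = ℓ₁.idxOf x := fun x hx =>
    List.idxOf_append_of_mem ((hmem₁ x).mpr hx)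
  have hidx₂ : ∀ x ∈ S₂, (ℓ₁ ++ ℓ₂).idxOf x = ℓ₁.length + ℓ₂.idxOf x := by
    intro x hx
    have hnx : x ∉ ℓ₁ := fun h => (Finset.disjoint_left.mp hd ((hmem₁ x).mp h)) hx
    exact List.idxOf_append_of_notMem hnx
  have hlt₁ : ∀ x ∈ S₁, ℓ₁.idxOf x < ℓ₁.length := fun x hx =>
    List.idxOf_lt_length_iff.mpr ((hmem₁ x).mpr hx)
  have hT1 : T₁ = S₁ ∩ T₁ ∪ S₂ ∩ T₁ := by
    rw [← Finset.union_inter_distrib_right, ← hTS]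
    ext x; simp only [Finset.mem_inter, Finset.mem_union]; tauto
  have hT2 : T₂ = S₁ ∩ T₂ ∪ S₂ ∩ T₂ := by
    rw [← Finset.union_inter_distrib_right, ← hTS]
    ext x; simp only [Finset.mem_inter, Finset.mem_union]; tauto
  unfold schub
  rw [hT1, hT2, Finset.union_product, Finset.product_union, Finset.product_union,
    Finset.filter_union, Finset.filter_union, Finset.filter_union]
  have e1 : ((S₁ ∩ T₁) ×ˢ (S₁ ∩ T₂)).filter
        (fun p => (ℓ₁ ++ ℓ₂).idxOf p.2 < (ℓ₁ ++ ℓ₂).idxOf p.1)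
      = ((S₁ ∩ T₁) ×ˢ (S₁ ∩ T₂)).filter (fun p => ℓ₁.idxOf p.2 < ℓ₁.idxOf p.1) := by
    apply Finset.filter_congr
    intro p hp
    simp only [Finset.mem_product, Finset.mem_inter] at hp
    rw [hidx₁ _ hp.1.1, hidx₁ _ hp.2.1]
  have e2 : ((S₁ ∩ T₁) ×ˢ (S₂ ∩ T₂)).filter
        (fun p => (ℓ₁ ++ ℓ₂).idxOf p.2 < (ℓ₁ ++ ℓ₂).idxOf p.1) = ∅ := by
    rw [Finset.filter_eq_empty_iff]
    intro p hp
    simp only [Finset.mem_product, Finset.mem_inter] at hp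
    rw [hidx₁ _ hp.1.1, hidx₂ _ hp.2.1]
    have := hlt₁ _ hp.1.1
    omega
  have e3 : ((S₂ ∩ T₁) ×ˢ (S₁ ∩ T₂)).filter
        (fun p => (ℓ₁ ++ ℓ₂).idxOf p.2 < (ℓ₁ ++ ℓ₂).idxOf p.1)
      = (S₂ ∩ T₁) ×ˢ (S₁ ∩ T₂) := by
    rw [Finset.filter_eq_self]
    intro p hp
    simp only [Finset.mem_product, Finset.mem_inter] at hp
    rw [hidx₂ _ hp.1.1, hidx₁ _ hp.2.1]
    have := hlt₁ _ hp.2.1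
    omega
  have e4 : ((S₂ ∩ T₁) ×ˢ (S₂ ∩ T₂)).filter
        (fun p => (ℓ₁ ++ ℓ₂).idxOf p.2 < (ℓ₁ ++ ℓ₂).idxOf p.1)
      = ((S₂ ∩ T₁) ×ˢ (S₂ ∩ T₂)).filter (fun p => ℓ₂.idxOf p.2 < ℓ₂.idxOf p.1) := by
    apply Finset.filter_congr
    intro p hp
    simp only [Finset.mem_product, Finset.mem_inter] at hp
    rw [hidx₂ _ hp.1.1, hidx₂ _ hp.2.1]
    omega
  rw [e1, e2, e3, e4, Finset.union_empty]
  have hdS : ∀ x, x ∈ S₁ → x ∈ S₂ → False := fun x h1 h2 =>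
    Finset.disjoint_left.mp hd h1 h2
  have d1 : Disjoint
      (((S₁ ∩ T₁) ×ˢ (S₁ ∩ T₂)).filter (fun p => ℓ₁.idxOf p.2 < ℓ₁.idxOf p.1))
      ((S₂ ∩ T₁) ×ˢ (S₁ ∩ T₂) ∪
        ((S₂ ∩ T₁) ×ˢ (S₂ ∩ T₂)).filter (fun p => ℓ₂.idxOf p.2 < ℓ₂.idxOf p.1)) := by
    rw [Finset.disjoint_left]
    intro p hp hq
    simp only [Finset.mem_filter, Finset.mem_union, Finset.mem_product,
      Finset.mem_inter] at hp hq
    rcases hq with h | h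
    · exact hdS p.1 hp.1.1.1 h.1.1
    · exact hdS p.1 hp.1.1.1 h.1.1.1
  have d2 : Disjoint ((S₂ ∩ T₁) ×ˢ (S₁ ∩ T₂))
      (((S₂ ∩ T₁) ×ˢ (S₂ ∩ T₂)).filter (fun p => ℓ₂.idxOf p.2 < ℓ₂.idxOf p.1)) := by
    rw [Finset.disjoint_left]
    intro p hp hq
    simp only [Finset.mem_filter, Finset.mem_product, Finset.mem_inter] at hp hq
    exact hdS p.2 hp.2.1 hq.1.2.1
  rw [Finset.card_union_of_disjoint d1, Finset.card_union_of_disjoint d2,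
    Finset.card_product]
  have k1 : ∀ T : Finset α, S₁ ∩ (S₁ ∩ T ∪ S₂ ∩ T) = S₁ ∩ T := by
    intro T; ext x; have hx := hdS x
    simp only [Finset.mem_inter, Finset.mem_union]; tauto
  have k2 : ∀ T : Finset α, S₂ ∩ (S₁ ∩ T ∪ S₂ ∩ T) = S₂ ∩ T := by
    intro T; ext x; have hx := hdS x
    simp only [Finset.mem_inter, Finset.mem_union]; tauto
  rw [k1, k1, k2, k2]
  ring
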